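/- For any positive definite function θ∈𝒫 there exists β∈𝒦ℒ such that for any t₀≥0 and any continuous function ω:[t₀,∞)→ℝ≥0 satisfying the differential inequality D⁺ω(t) ≤ −θ(ω(t)) for all t≥t₀ (where D⁺ denotes the right upper Dini derivative), it holds that ω(t) ≤ β(ω(t₀), t−t₀) for all t≥t₀. -/

import Mathlib

open Filter Topology Set MeasureTheory
open scoped RealInnerProductSpace

noncomputable section

/-- Class `𝒦`: continuous, strictly increasing on `[0,∞)`, vanishing at `0`. -/
structure ClassK (g : ℝ → ℝ) : Prop where
  cont : ContinuousOn g (Set.Ici 0)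
  mono : StrictMonoOn g (Set.Ici 0)
  zero : g 0 = 0
  nonneg : ∀ r : ℝ, 0 ≤ r → 0 ≤ g r

/-- Class `𝒦∞`: unbounded class-`𝒦` functions. -/
structure ClassKInf (g : ℝ → ℝ) : Prop where
  toClassK : ClassK g
  unbounded : ∀ M : ℝ, ∃ r : ℝ, 0 ≤ r ∧ M < g r

/-- Class `𝒫`: positive definite functions. -/
structure ClassPD (g : ℝ → ℝ) : Prop where
  cont : ContinuousOn g (Set.Ici 0)
  zero : g 0 = 0
  pos : ∀ r : ℝ, 0 < r → 0 < g r

/-- Class `𝒦ℒ`. -/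
structure ClassKL (b : ℝ → ℝ → ℝ) : Prop where
  classK : ∀ t : ℝ, 0 ≤ t → ClassK (fun r => b r t)
  contL : ∀ r : ℝ, 0 < r → ContinuousOn (fun t => b r t) (Set.Ici 0)
  antiL : ∀ r : ℝ, 0 < r → StrictAntiOn (fun t => b r t) (Set.Ici 0)
  tendstoL : ∀ r : ℝ, 0 < r → Tendsto (fun t => b r t) atTop (nhds 0)


set_option linter.unusedSectionVars false

namespace Stmt18Aux


/-- 1-Lipschitz inf-convolution lower bound of `θ`. -/
def hatF (θ : ℝ → ℝ) (s : ℝ) : ℝ := sInf ((fun u => θ u + |s - u|) '' Set.Ici 0)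

variable {θ : ℝ → ℝ}

lemma theta_nonneg (hc0 : θ 0 = 0) (hpos : ∀ r : ℝ, 0 < r → 0 < θ r) :
    ∀ u : ℝ, 0 ≤ u → 0 ≤ θ u := by
  intro u hu
  rcases hu.lt_or_eq with h | h
  · exact (hpos u h).le
  · simp [← h, hc0]

lemma hat_bdd (hn : ∀ u : ℝ, 0 ≤ u → 0 ≤ θ u) (s : ℝ) :
    BddBelow ((fun u => θ u + |s - u|) '' Set.Ici 0) := by
  refine ⟨0, ?_⟩
  rintro y ⟨u, hu, rfl⟩
  have := hn u hu
  positivity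

lemma hat_nonempty (s : ℝ) : ((fun u => θ u + |s - u|) '' Set.Ici 0).Nonempty :=
  ⟨_, ⟨0, Set.mem_Ici.2 (le_refl 0), rfl⟩⟩

lemma hat_nonneg (hn : ∀ u : ℝ, 0 ≤ u → 0 ≤ θ u) (s : ℝ) : 0 ≤ hatF θ s := by
  refine le_csInf (hat_nonempty s) ?_
  rintro y ⟨u, hu, rfl⟩
  have := hn u hu
  positivity

lemma hat_le (hn : ∀ u : ℝ, 0 ≤ u → 0 ≤ θ u) {s : ℝ} (hs : 0 ≤ s) : hatF θ s ≤ θ s := by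
  have h := csInf_le (hat_bdd hn s) (Set.mem_image_of_mem _ hs)
  simp at h; exact h

lemma hat_le_id (hn : ∀ u : ℝ, 0 ≤ u → 0 ≤ θ u) (hc0 : θ 0 = 0) {s : ℝ} (hs : 0 ≤ s) :
    hatF θ s ≤ s := by
  have h := csInf_le (hat_bdd hn s) (Set.mem_image_of_mem _ (le_refl (0:ℝ)))
  simp only [hc0, sub_zero, zero_add] at h
  simp [abs_of_nonneg hs] at h; exact h

lemma hat_lip (hn : ∀ u : ℝ, 0 ≤ u → 0 ≤ θ u) (s s' : ℝ) :
    hatF θ s ≤ hatF θ s' + |s - s'| := by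
  rw [← sub_le_iff_le_add]
  refine le_csInf (hat_nonempty s') ?_
  rintro y ⟨u, hu, rfl⟩
  simp only
  have h1 : hatF θ s ≤ θ u + |s - u| := csInf_le (hat_bdd hn s) (Set.mem_image_of_mem _ hu)
  have h2 : |s - u| ≤ |s' - u| + |s - s'| := by
    have := abs_sub_abs_le_abs_sub (s - u) (s' - u)
    have h3 : |s - u| ≤ |s' - u| + |(s - u) - (s' - u)| := by
      have := abs_sub (s - u) (s' - u)
      calc |s - u| = |(s' - u) + ((s - u) - (s' - u))| := by ring_nf
      _ ≤ |s' - u| + |(s - u) - (s' - u)| := abs_add_le _ _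
    simpa using h3
  linarith

lemma hat_cont (hn : ∀ u : ℝ, 0 ≤ u → 0 ≤ θ u) : Continuous (hatF θ) := by
  have : LipschitzWith 1 (hatF θ) := by
    refine LipschitzWith.of_dist_le_mul fun a b => ?_
    rw [Real.dist_eq, Real.dist_eq, NNReal.coe_one, one_mul]
    rw [abs_sub_le_iff]
    constructor
    · have := hat_lip hn a b; linarith [abs_sub_comm a b ▸ this]
    · have := hat_lip hn b a
      have h2 : |b - a| = |a - b| := abs_sub_comm b a
      linarith [this, h2]
  exact this.continuous

lemma hat_pos (hcont : ContinuousOn θ (Set.Ici 0)) (hc0 : θ 0 = 0)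
    (hpos : ∀ r : ℝ, 0 < r → 0 < θ r) {s : ℝ} (hs : 0 < s) : 0 < hatF θ s := by
  have hn := theta_nonneg hc0 hpos
  have hIcc : Set.Icc (s / 2) (2 * s) ⊆ Set.Ici (0:ℝ) := by
    intro u hu
    have := hu.1
    have : (0:ℝ) ≤ s / 2 := by linarith
    exact le_trans this hu.1
  have hne : (Set.Icc (s / 2) (2 * s)).Nonempty := ⟨s, by constructor <;> linarith⟩
  obtain ⟨u₀, hu₀, hmin⟩ := isCompact_Icc.exists_isMinOn hne (hcont.mono hIcc)
  have hc : 0 < θ u₀ := hpos u₀ (lt_of_lt_of_le (by linarith : (0:ℝ) < s / 2) hu₀.1)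
  have key : min (s / 2) (θ u₀) ≤ hatF θ s := by
    refine le_csInf (hat_nonempty s) ?_
    rintro y ⟨u, hu, rfl⟩
    by_cases h1 : u ∈ Set.Icc (s / 2) (2 * s)
    · have := hmin h1
      have habs : (0:ℝ) ≤ |s - u| := abs_nonneg _
      calc min (s / 2) (θ u₀) ≤ θ u₀ := min_le_right _ _
      _ ≤ θ u := hmin h1
      _ ≤ θ u + |s - u| := by linarith
    · have hθu := hn u hu
      have habs : s / 2 ≤ |s - u| := by
        rw [Set.mem_Icc, not_and_or] at h1
        rcases h1 with h | h
        · push_neg at h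
          rw [abs_of_nonneg (by linarith)]
          linarith
        · push_neg at h
          rw [abs_of_nonpos (by linarith)]
          linarith
      calc min (s / 2) (θ u₀) ≤ s / 2 := min_le_left _ _
      _ ≤ θ u + |s - u| := by linarith
  have : 0 < min (s / 2) (θ u₀) := lt_min (by linarith) hc
  linarith
/-- The decreasing "time reparametrisation". -/
def etaF (θ : ℝ → ℝ) (r : ℝ) : ℝ := (∫ s in r..(1:ℝ), 2 / hatF θ s) + 1 - r

lemma g_contOn (hcont : ContinuousOn θ (Set.Ici 0)) (hc0 : θ 0 = 0)
    (hpos : ∀ r : ℝ, 0 < r → 0 < θ r) :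
    ContinuousOn (fun s => 2 / hatF θ s) (Set.Ioi (0:ℝ)) := by
  have hn := theta_nonneg hc0 hpos
  exact continuousOn_const.div ((hat_cont hn).continuousOn)
    (fun s hs => (hat_pos hcont hc0 hpos hs).ne')

lemma g_nonneg (hc0 : θ 0 = 0) (hpos : ∀ r : ℝ, 0 < r → 0 < θ r) (s : ℝ) :
    0 ≤ 2 / hatF θ s := by
  have := hat_nonneg (theta_nonneg hc0 hpos) s
  positivity

lemma eta_hasDerivAt (hcont : ContinuousOn θ (Set.Ici 0)) (hc0 : θ 0 = 0)
    (hpos : ∀ r : ℝ, 0 < r → 0 < θ r) {r : ℝ} (hr : 0 < r) :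
    HasDerivAt (etaF θ) (-(2 / hatF θ r) - 1) r := by
  have hg := g_contOn hcont hc0 hpos
  have hsub : Set.uIcc r 1 ⊆ Set.Ioi (0:ℝ) := by
    intro x hx
    have := hx.1
    have h1 : min r 1 ≤ x := hx.1
    have : (0:ℝ) < min r 1 := lt_min hr one_pos
    exact lt_of_lt_of_le this h1
  have hint : IntervalIntegrable (fun s => 2 / hatF θ s) volume r 1 :=
    (hg.mono hsub).intervalIntegrable
  have hmeas : StronglyMeasurableAtFilter (fun s => 2 / hatF θ s) (𝓝 r) volume :=
    hg.stronglyMeasurableAtFilter isOpen_Ioi r hr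
  have hca : ContinuousAt (fun s => 2 / hatF θ s) r :=
    (hg.continuousAt (isOpen_Ioi.mem_nhds hr))
  have h1 : HasDerivAt (fun u => ∫ s in u..(1:ℝ), 2 / hatF θ s) (-(2 / hatF θ r)) r :=
    (intervalIntegral.integral_hasStrictDerivAt_left hint hmeas hca).hasDerivAt
  have h2 : HasDerivAt (etaF θ) (-(2 / hatF θ r) + 0 - 1) r := by
    exact ((h1.add_const 1).sub (hasDerivAt_id r)).congr_deriv (by ring)
  simpa using h2
variable (hcont : ContinuousOn θ (Set.Ici 0)) (hc0 : θ 0 = 0)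
  (hpos : ∀ r : ℝ, 0 < r → 0 < θ r)
include hcont hc0 hpos

lemma eta_strictAnti : StrictAntiOn (etaF θ) (Set.Ioi 0) := by
  refine strictAntiOn_of_deriv_neg (convex_Ioi 0) ?_ ?_
  · intro x hx
    exact ((eta_hasDerivAt hcont hc0 hpos hx).continuousAt).continuousWithinAt
  · intro x hx
    rw [interior_Ioi] at hx
    rw [(eta_hasDerivAt hcont hc0 hpos hx).deriv]
    have := g_nonneg hc0 hpos (θ := θ) x
    linarith

lemma eta_le_one_sub {r : ℝ} (hr : 1 ≤ r) : etaF θ r ≤ 1 - r := by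
  have h1 : (0:ℝ) ≤ ∫ s in (1:ℝ)..r, 2 / hatF θ s :=
    intervalIntegral.integral_nonneg hr (fun u _ => g_nonneg hc0 hpos u)
  have h2 : (∫ s in r..(1:ℝ), 2 / hatF θ s) = -∫ s in (1:ℝ)..r, 2 / hatF θ s :=
    intervalIntegral.integral_symm _ _
  unfold etaF
  rw [h2]
  linarith

lemma eta_ge_log {r : ℝ} (hr : 0 < r) (hr1 : r ≤ 1) : -(2 * Real.log r) ≤ etaF θ r := by
  have hn := theta_nonneg hc0 hpos
  have hsub : Set.uIcc r 1 ⊆ Set.Ioi (0:ℝ) := by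
    intro x hx
    have h1 : min r 1 ≤ x := hx.1
    have : (0:ℝ) < min r 1 := lt_min hr one_pos
    exact lt_of_lt_of_le this h1
  have hint : IntervalIntegrable (fun s => 2 / hatF θ s) volume r 1 :=
    ((g_contOn hcont hc0 hpos).mono hsub).intervalIntegrable
  have hint2 : IntervalIntegrable (fun s : ℝ => 2 / s) volume r 1 := by
    refine ContinuousOn.intervalIntegrable ?_
    exact (continuousOn_const.div continuousOn_id (fun x hx => (hsub hx).ne')) 
  have hmono : (∫ s in r..(1:ℝ), 2 / s) ≤ ∫ s in r..(1:ℝ), 2 / hatF θ s := by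
    refine intervalIntegral.integral_mono_on hr1 hint2 hint ?_
    intro x hx
    have hx0 : 0 < x := lt_of_lt_of_le hr hx.1
    have hhat_pos : 0 < hatF θ x := hat_pos hcont hc0 hpos hx0
    have hle : hatF θ x ≤ x := hat_le_id hn hc0 hx0.le
    exact div_le_div_of_nonneg_left (by norm_num) hhat_pos hle
  have hlog : (∫ s in r..(1:ℝ), 2 / s) = -(2 * Real.log r) := by
    have h0 : (0:ℝ) ∉ Set.uIcc r 1 := fun h => (lt_irrefl (0:ℝ)) (hsub h)
    have : (∫ s in r..(1:ℝ), 2 / s) = ∫ s in r..(1:ℝ), 2 * s⁻¹ := by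
      simp_rw [div_eq_mul_inv]
    rw [this, intervalIntegral.integral_const_mul, integral_inv h0]
    rw [Real.log_div one_ne_zero hr.ne', Real.log_one]
    ring
  have hfinal : 0 ≤ 1 - r := by linarith
  unfold etaF
  rw [← hlog]
  linarith

/-- `zetaF = -etaF ∘ exp` is a strictly increasing continuous surjection `ℝ → ℝ`. -/
def zetaF (θ : ℝ → ℝ) (u : ℝ) : ℝ := - etaF θ (Real.exp u)

lemma zeta_hasDerivAt (u : ℝ) :
    HasDerivAt (zetaF θ) ((2 / hatF θ (Real.exp u) + 1) * Real.exp u) u := by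
  have h1 := (eta_hasDerivAt hcont hc0 hpos (Real.exp_pos u)).comp u (Real.hasDerivAt_exp u)
  have h2 := h1.neg
  exact h2.congr_deriv (by ring)

lemma zeta_deriv_pos (u : ℝ) : 0 < (2 / hatF θ (Real.exp u) + 1) * Real.exp u := by
  have := g_nonneg hc0 hpos (θ := θ) (Real.exp u)
  have := Real.exp_pos u
  nlinarith

lemma zeta_strictMono : StrictMono (zetaF θ) := by
  refine strictMono_of_deriv_pos fun u => ?_
  rw [(zeta_hasDerivAt hcont hc0 hpos u).deriv]
  exact zeta_deriv_pos hcont hc0 hpos u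

lemma zeta_surj : Function.Surjective (zetaF θ) := by
  have hC : Continuous (zetaF θ) := by
    rw [continuous_iff_continuousAt]
    exact fun u => (zeta_hasDerivAt hcont hc0 hpos u).continuousAt
  refine hC.surjective ?_ ?_
  · -- atTop
    refine tendsto_atTop_mono' atTop ?_ tendsto_id
    filter_upwards [Filter.eventually_ge_atTop (0:ℝ)] with u hu
    have h1 : etaF θ (Real.exp u) ≤ 1 - Real.exp u :=
      eta_le_one_sub hcont hc0 hpos (Real.one_le_exp hu)
    have h2 : u + 1 ≤ Real.exp u := Real.add_one_le_exp u
    simp only [zetaF, id]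
    linarith
  · -- atBot
    refine tendsto_atBot_mono' atBot (f₁ := fun u : ℝ => 2 * u) (f₂ := fun u : ℝ => zetaF θ u) ?_ ?_
    · filter_upwards [Filter.eventually_le_atBot (0:ℝ)] with u hu
      have h1 : -(2 * Real.log (Real.exp u)) ≤ etaF θ (Real.exp u) :=
        eta_ge_log hcont hc0 hpos (Real.exp_pos u) (Real.exp_le_one_iff.2 hu)
      rw [Real.log_exp] at h1
      show zetaF θ u ≤ 2 * u
      simp only [zetaF]
      linarith
    · have : Tendsto (fun u : ℝ => 2 * u) atBot atBot := by
        exact (tendsto_id (α := ℝ) (x := atBot)).const_mul_atBot two_pos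
      exact this
lemma exists_psi :
    ∃ ψ : ℝ → ℝ, Continuous ψ ∧ StrictAnti ψ ∧ (∀ x, 0 < ψ x) ∧
      Tendsto ψ atTop (𝓝 0) ∧ (∀ r : ℝ, 0 < r → ψ (etaF θ r) = r) ∧
      (∀ x : ℝ, HasDerivAt ψ (-(1 / (2 / hatF θ (ψ x) + 1))) x) := by
  set e : ℝ ≃o ℝ := StrictMono.orderIsoOfSurjective (zetaF θ)
    (zeta_strictMono hcont hc0 hpos) (zeta_surj hcont hc0 hpos) with he
  have hcoe : ∀ u : ℝ, e u = zetaF θ u := fun u => rfl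
  have happly : ∀ x : ℝ, zetaF θ (e.symm x) = x := fun x =>
    StrictMono.orderIsoOfSurjective_self_symm_apply _ _ _ x
  have hsymm_zeta : ∀ u : ℝ, e.symm (zetaF θ u) = u := fun u =>
    StrictMono.orderIsoOfSurjective_symm_apply_self _ _ _ u
  have hsymm_cont : Continuous (e.symm : ℝ → ℝ) := OrderIso.continuous e.symm
  refine ⟨fun x => Real.exp (e.symm (-x)), ?_, ?_, ?_, ?_, ?_, ?_⟩
  · exact Real.continuous_exp.comp (hsymm_cont.comp continuous_neg)
  · intro x y hxy
    have : e.symm (-y) < e.symm (-x) := e.symm.strictMono (by linarith)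
    exact Real.exp_lt_exp.2 this
  · intro x; exact Real.exp_pos _
  · have h1 : Tendsto (fun x : ℝ => -x) atTop atBot := tendsto_neg_atTop_atBot
    have h2 : Tendsto (e.symm : ℝ → ℝ) atBot atBot :=
      tendsto_atBot_atBot_of_monotone e.symm.monotone
        (fun b => ⟨e b, (hsymm_zeta b ▸ (by rw [← hcoe]; rw [e.symm_apply_apply]) : e.symm (e b) = b).le⟩)
    exact Real.tendsto_exp_atBot.comp (h2.comp h1)
  · intro r hr
    have h1 : -etaF θ r = zetaF θ (Real.log r) := by
      simp [zetaF, Real.exp_log hr]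
    show Real.exp (e.symm (-etaF θ r)) = r
    rw [h1, hsymm_zeta, Real.exp_log hr]
  · intro x
    set w := e.symm (-x) with hw
    set v := Real.exp w with hv
    have hvpos : 0 < v := Real.exp_pos _
    have hhat : 0 < hatF θ v := hat_pos hcont hc0 hpos hvpos
    have hζ' : HasDerivAt (zetaF θ) ((2 / hatF θ (Real.exp w) + 1) * Real.exp w) w :=
      zeta_hasDerivAt hcont hc0 hpos w
    have hne : (2 / hatF θ (Real.exp w) + 1) * Real.exp w ≠ 0 :=
      (zeta_deriv_pos hcont hc0 hpos w).ne'
    have hinv : HasDerivAt (fun y => (e.symm y : ℝ))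
        (((2 / hatF θ (Real.exp w) + 1) * Real.exp w)⁻¹) (-x) := by
      refine HasDerivAt.of_local_left_inverse (f := zetaF θ) (hsymm_cont.continuousAt) ?_ hne ?_
      · exact hζ'
      · exact Filter.Eventually.of_forall happly
    have hneg : HasDerivAt (fun x : ℝ => (e.symm (-x) : ℝ))
        (((2 / hatF θ (Real.exp w) + 1) * Real.exp w)⁻¹ * (-1)) x := by
      have hn : HasDerivAt (fun x : ℝ => -x) (-1 : ℝ) x := hasDerivAt_neg x
      exact HasDerivAt.comp x hinv hn
    have hexp : HasDerivAt (fun x : ℝ => Real.exp (e.symm (-x)))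
        (Real.exp w * (((2 / hatF θ (Real.exp w) + 1) * Real.exp w)⁻¹ * (-1))) x :=
      hneg.exp
    refine hexp.congr_deriv ?_
    rw [← hv]
    show v * (((2 / hatF θ v + 1) * v)⁻¹ * (-1)) = -(1 / (2 / hatF θ v + 1))
    have h2 : 0 < 2 / hatF θ v + 1 := by positivity
    field_simp
omit hcont hc0 hpos

lemma eventually_of_limsup_le {u : ℝ → ℝ} {l : Filter ℝ} {c p : ℝ} (hc : c < 0)
    (h : Filter.limsup u l ≤ c) (hp : c < p) : ∀ᶠ x in l, u x < p := by
  set S := {a : ℝ | ∀ᶠ x in l, u x ≤ a} with hS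
  have hlim : Filter.limsup u l = sInf S := Filter.limsup_eq
  by_cases hSne : S.Nonempty
  · by_cases hb : BddBelow S
    · have : sInf S < p := by rw [← hlim]; exact lt_of_le_of_lt h hp
      obtain ⟨a, haS, hap⟩ := (csInf_lt_iff hb hSne).1 this
      exact haS.mono fun x hx => lt_of_le_of_lt hx hap
    · exfalso
      rw [hlim, Real.sInf_of_not_bddBelow hb] at h
      linarith
  · exfalso
    rw [Set.not_nonempty_iff_eq_empty] at hSne
    rw [hlim, hSne, Real.sInf_empty] at h
    linarith

lemma tendsto_sub_nhdsGT (x : ℝ) :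
    Tendsto (fun z : ℝ => z - x) (𝓝[>] x) (𝓝[>] (0:ℝ)) := by
  refine tendsto_nhdsWithin_of_tendsto_nhds_of_eventually_within _ ?_ ?_
  · have h1 : Tendsto (fun z : ℝ => z - x) (𝓝 x) (𝓝 (x - x)) :=
      (continuous_id.sub continuous_const).tendsto x
    rw [sub_self] at h1
    exact h1.mono_left nhdsWithin_le_nhds
  · filter_upwards [self_mem_nhdsWithin] with z hz
    exact sub_pos.2 (Set.mem_Ioi.1 hz)

/-- From the Dini-derivative hypothesis at a point where `ω` is positive, extract the
frequently-small-slope condition. -/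
lemma slope_freq {ω : ℝ → ℝ} {x : ℝ}
    (hD : Filter.limsup (fun h => (ω (x + h) - ω x) / h) (nhdsWithin 0 (Set.Ioi 0)) ≤ - θ (ω x))
    (hpos' : 0 < θ (ω x)) :
    ∀ p : ℝ, - θ (ω x) < p → ∃ᶠ z in 𝓝[>] x, slope ω x z < p := by
  intro p hp
  have hc : - θ (ω x) < 0 := by linarith
  have hev : ∀ᶠ h in 𝓝[>] (0:ℝ), (ω (x + h) - ω x) / h < p :=
    eventually_of_limsup_le hc hD hp
  have hev2 : ∀ᶠ z in 𝓝[>] x, (ω (x + (z - x)) - ω x) / (z - x) < p :=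
    (tendsto_sub_nhdsGT x).eventually hev
  refine (hev2.mono fun z hz => ?_).frequently
  rw [slope_def_field]
  have hzz : x + (z - x) = z := by ring
  rwa [hzz] at hz
lemma zero_stays (hpos : ∀ r : ℝ, 0 < r → 0 < θ r) {t0 : ℝ} {ω : ℝ → ℝ}
    (hωc : ContinuousOn ω (Set.Ici t0)) (hnn : ∀ t : ℝ, t0 ≤ t → 0 ≤ ω t)
    (hD : ∀ t : ℝ, t0 ≤ t →
      Filter.limsup (fun h => (ω (t + h) - ω t) / h) (nhdsWithin 0 (Set.Ioi 0)) ≤ - θ (ω t)) :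
    ∀ x : ℝ, t0 ≤ x → ω x = 0 → ∀ z : ℝ, x ≤ z → ω z = 0 := by
  intro x hx hx0 z hxz
  by_contra hne
  have hz0 : 0 < ω z := (hnn z (hx.trans hxz)).lt_of_ne (Ne.symm hne)
  have hxz' : x < z := hxz.lt_of_ne (by rintro rfl; exact hne hx0)
  set K := Set.Icc x z ∩ ω ⁻¹' {0} with hK
  have hKcl : IsClosed K :=
    ContinuousOn.preimage_isClosed_of_isClosed
      (hωc.mono (fun u hu => hx.trans hu.1)) isClosed_Icc isClosed_singleton
  have hKcomp : IsCompact K := isCompact_Icc.of_isClosed_subset hKcl Set.inter_subset_left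
  have hKne : K.Nonempty := ⟨x, ⟨le_refl x, hxz⟩, by simp [hx0]⟩
  set y := sSup K with hy
  have hyK : y ∈ K := hKcomp.sSup_mem hKne
  have hy0 : ω y = 0 := hyK.2
  have hxy : x ≤ y := hyK.1.1
  have hyz : y < z := lt_of_le_of_ne hyK.1.2 (by
    intro h; rw [h] at hy0; exact hz0.ne' hy0)
  have hpos_mid : ∀ u : ℝ, y < u → u ≤ z → 0 < ω u := by
    intro u hu1 hu2
    have hu0 : 0 ≤ ω u := hnn u (hx.trans (hxy.trans hu1.le))
    rcases hu0.lt_or_eq with h | h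
    · exact h
    · exfalso
      have huK : u ∈ K := ⟨⟨hxy.trans hu1.le, hu2⟩, by simp [← h]⟩
      have := le_csSup hKcomp.bddAbove huK
      rw [← hy] at this
      linarith
  have hcomp : ∀ y' : ℝ, y' ∈ Set.Ioo y z → ω z ≤ ω y' := by
    intro y' hy'
    have ht0y' : t0 ≤ y' := hx.trans (hxy.trans hy'.1.le)
    have hres := image_le_of_liminf_slope_right_lt_deriv_boundary' (f := ω)
      (f' := fun u => -θ (ω u)) (a := y') (b := z)
      (B := fun _ => ω y') (B' := fun _ => (0:ℝ))
      (hωc.mono (fun u hu => ht0y'.trans hu.1))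
      (fun u hu p hp => slope_freq (hD u (ht0y'.trans hu.1))
        (hpos _ (hpos_mid u (lt_of_lt_of_le hy'.1 hu.1) hu.2.le)) p hp)
      (le_refl (ω y')) continuousOn_const
      (fun u _ => hasDerivWithinAt_const _ _ _)
      (fun u hu _ => by
        have := hpos _ (hpos_mid u (lt_of_lt_of_le hy'.1 hu.1) hu.2.le)
        show -θ (ω u) < 0
        linarith)
    exact hres ⟨hy'.2.le, le_refl z⟩
  have hcw : ContinuousWithinAt ω (Set.Ici t0) y := hωc y (Set.mem_Ici.2 (hx.trans hxy))
  have hev : ∀ᶠ u in 𝓝[Set.Ici t0] y, ω u < ω z :=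
    Filter.Tendsto.eventually_lt_const (hy0 ▸ hz0) hcw
  rw [eventually_nhdsWithin_iff, Metric.eventually_nhds_iff] at hev
  obtain ⟨ε, hε, hball⟩ := hev
  set y' := y + min (ε / 2) ((z - y) / 2) with hy'
  have hmin_pos : 0 < min (ε / 2) ((z - y) / 2) := lt_min (by linarith) (by linarith)
  have hy'mem : y' ∈ Set.Ioo y z := by
    constructor
    · simp only [hy']; linarith
    · have : min (ε / 2) ((z - y) / 2) ≤ (z - y) / 2 := min_le_right _ _
      simp only [hy']; linarith
  have hdist : dist y' y < ε := by
    rw [Real.dist_eq]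
    have h1 : min (ε / 2) ((z - y) / 2) ≤ ε / 2 := min_le_left _ _
    rw [hy']
    rw [show y + min (ε / 2) ((z - y) / 2) - y = min (ε / 2) ((z - y) / 2) by ring]
    rw [abs_of_pos hmin_pos]
    linarith
  have h1 : ω y' < ω z := hball hdist (Set.mem_Ici.2 (by
    have : t0 ≤ y := hx.trans hxy
    simp only [hy']; linarith))
  exact absurd (hcomp y' hy'mem) (not_le.2 h1)
end Stmt18Aux

open Stmt18Aux in
/-- Comparison principle: for every positive definite `θ` there is a `𝒦ℒ` function `β`
bounding every nonnegative continuous solution of `D⁺ω ≤ −θ(ω)`. -/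
theorem stmt18 (θ : ℝ → ℝ) (hθ : ClassPD θ) :
    ∃ β : ℝ → ℝ → ℝ, ClassKL β ∧
      ∀ t0 : ℝ, 0 ≤ t0 → ∀ ω : ℝ → ℝ,
        ContinuousOn ω (Set.Ici t0) → (∀ t : ℝ, t0 ≤ t → 0 ≤ ω t) →
        (∀ t : ℝ, t0 ≤ t →
          Filter.limsup (fun h => (ω (t + h) - ω t) / h) (nhdsWithin 0 (Set.Ioi 0)) ≤
            - θ (ω t)) →
        ∀ t : ℝ, t0 ≤ t → ω t ≤ β (ω t0) (t - t0) := by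
  obtain ⟨ψ, hψc, hψa, hψpos, hψ0, hψeta, hψd⟩ := exists_psi hθ.cont hθ.zero hθ.pos
  set η := etaF θ with hη
  refine ⟨fun r s => if r = 0 then 0 else ψ (η r + s), ⟨?_, ?_, ?_, ?_⟩, ?_⟩
  · -- classK
    intro t htnn
    refine ⟨?_, ?_, if_pos rfl, ?_⟩
    · -- continuity in r on Ici 0
      intro r hr
      rcases (Set.mem_Ici.1 hr).lt_or_eq with h | h
      · have hev : ∀ᶠ r' in 𝓝 r,
            ψ (η r' + t) = (if r' = 0 then 0 else ψ (η r' + t)) := by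
          filter_upwards [eventually_ne_nhds h.ne'] with r' hr'
          rw [if_neg hr']
        have hca : ContinuousAt (fun r' => ψ (η r' + t)) r :=
          hψc.continuousAt.comp
            (((eta_hasDerivAt hθ.cont hθ.zero hθ.pos h).continuousAt).add continuousAt_const)
        exact (hca.congr hev).continuousWithinAt
      · subst h
        have key : Tendsto (fun r => if r = 0 then 0 else ψ (η r + t)) (𝓝[Set.Ici 0] 0) (𝓝 0) := by
          refine squeeze_zero' ?_ ?_ (tendsto_id.mono_right ?_)
          · filter_upwards [self_mem_nhdsWithin] with r _
            by_cases hr0 : r = 0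
            · rw [if_pos hr0]
            · rw [if_neg hr0]; exact (hψpos _).le
          · filter_upwards [self_mem_nhdsWithin] with r hrIci
            by_cases hr0 : r = 0
            · rw [if_pos hr0, hr0]; simp
            · rw [if_neg hr0]
              have hr0' : 0 < r := (Set.mem_Ici.1 hrIci).lt_of_ne (Ne.symm hr0)
              calc ψ (η r + t) ≤ ψ (η r) :=
                hψa.antitone (le_add_of_nonneg_right htnn)
              _ = r := hψeta r hr0'
          · exact nhdsWithin_le_nhds
        show Tendsto (fun r => if r = 0 then 0 else ψ (η r + t)) (𝓝[Set.Ici 0] 0)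
          (𝓝 (if (0:ℝ) = 0 then (0:ℝ) else ψ (η 0 + t)))
        rw [if_pos rfl]
        exact key
    · -- strict monotone in r on Ici 0
      intro a ha b hb hab
      rcases (Set.mem_Ici.1 ha).lt_or_eq with h | h
      · have hb' : 0 < b := lt_trans h hab
        simp only [if_neg h.ne', if_neg hb'.ne']
        have : η b < η a := eta_strictAnti hθ.cont hθ.zero hθ.pos
          (Set.mem_Ioi.2 h) (Set.mem_Ioi.2 hb') hab
        exact hψa (by linarith)
      · subst h
        have hb' : 0 < b := hab
        simp only [if_pos rfl, if_neg hb'.ne']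
        exact hψpos _
    · -- nonneg
      intro r _
      by_cases hr0 : r = 0
      · rw [if_pos hr0]
      · rw [if_neg hr0]; exact (hψpos _).le
  · -- contL
    intro r hr
    have heq : (fun t => if r = 0 then 0 else ψ (η r + t)) = fun t => ψ (η r + t) := by
      funext t; rw [if_neg hr.ne']
    rw [heq]
    exact (hψc.comp (continuous_const.add continuous_id)).continuousOn
  · -- antiL
    intro r hr s _ t _ hst
    simp only [if_neg hr.ne']
    exact hψa (by linarith)
  · -- tendstoL
    intro r hr
    simp only [if_neg hr.ne']
    exact hψ0.comp (tendsto_atTop_add_const_left atTop (η r) tendsto_id)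
  · -- the comparison bound
    intro t0 ht0 ω hωc hnn hD t ht
    have hZ := zero_stays hθ.pos hωc hnn hD
    show ω t ≤ if ω t0 = 0 then (0:ℝ) else ψ (η (ω t0) + (t - t0))
    by_cases hr : ω t0 = 0
    · rw [if_pos hr]
      have := hZ t0 le_rfl hr t ht
      rw [this]
    · have hr' : 0 < ω t0 := (hnn t0 le_rfl).lt_of_ne (Ne.symm hr)
      rw [if_neg hr]
      set r := ω t0 with hrdef
      set B := fun u => ψ (η r + (u - t0)) with hBdef
      have hn := theta_nonneg hθ.zero hθ.pos
      have hres := image_le_of_liminf_slope_right_lt_deriv_boundary' (f := ω)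
        (f' := fun u => -θ (ω u)) (a := t0) (b := t) (B := B)
        (B' := fun u => -(1 / (2 / hatF θ (B u) + 1)))
        (hωc.mono (fun u hu => hu.1))
        ?_ ?_ ?_ ?_ ?_
      · exact hres ⟨ht, le_refl t⟩
      · -- hf'
        intro u hu p hp
        rcases (hnn u hu.1).lt_or_eq with hpos' | hzero
        · exact slope_freq (hD u hu.1) (hθ.pos _ hpos') p hp
        · have hz : ∀ z : ℝ, u ≤ z → ω z = 0 := hZ u hu.1 hzero.symm
          have hp0 : 0 < p := by
            have : -θ (ω u) < p := hp
            rw [← hzero, hθ.zero] at this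
            linarith
          have hev : ∀ᶠ z in 𝓝[>] u, slope ω u z < p := by
            filter_upwards [self_mem_nhdsWithin] with z hz'
            rw [slope_def_field, hz z (le_of_lt hz'), ← hzero]
            simpa using hp0
          exact hev.frequently
      · -- ha : ω t0 ≤ B t0
        have : B t0 = r := by
          rw [hBdef]
          simp only [sub_self, add_zero]
          exact hψeta r hr'
        rw [this]
      · -- hB continuous
        exact (hψc.comp (continuous_const.add (continuous_id.sub continuous_const))).continuousOn
      · -- hB'
        intro u _
        have haff : HasDerivAt (fun u : ℝ => η r + (u - t0)) 1 u := by
          simpa using ((hasDerivAt_id u).sub_const t0).const_add (η r)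
        have hder := (hψd (η r + (u - t0))).comp u haff
        have : HasDerivAt B (-(1 / (2 / hatF θ (B u) + 1))) u := by
          refine hder.congr_deriv ?_
          rw [hBdef]
          ring
        exact this.hasDerivWithinAt
      · -- bound
        intro u _ hval
        have hBpos : 0 < B u := hψpos _
        have hhat : 0 < hatF θ (B u) := hat_pos hθ.cont hθ.zero hθ.pos hBpos
        have h2 : (0:ℝ) < 2 / hatF θ (B u) + 1 := by positivity
        have h1 : 1 / (2 / hatF θ (B u) + 1) < hatF θ (B u) := by
          rw [div_lt_iff₀ h2]
          have heq : hatF θ (B u) * (2 / hatF θ (B u) + 1) = 2 + hatF θ (B u) := by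
            field_simp
          rw [heq]; linarith
        have h3 : hatF θ (B u) ≤ θ (B u) := hat_le hn hBpos.le
        show -θ (ω u) < -(1 / (2 / hatF θ (B u) + 1))
        rw [hval]
        linarith
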